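/- For β > 1 and h > 0, the function I_{β,h}(m) = −β(½m² + hm) + ((1−m)/2) log(1−m) + ((1+m)/2) log(1+m) on (−1,1) has a unique global minimizer m₀, and m₀ is the largest solution in (−1,1) of the Curie-Weiss equation βm + βh = ½ log((1+m)/(1−m)) (equivalently m = tanh(β(m+h))); in particular m₀ ∈ (0,1). -/

import Mathlib

open Real Set

/-- The rate function of the Curie-Weiss model:
`I_{β,h}(m) = -β(½m² + hm) + ((1-m)/2) log(1-m) + ((1+m)/2) log(1+m)`. -/
noncomputable def cwRate (β h m : ℝ) : ℝ :=
  -β * ((1 / 2) * m ^ 2 + h * m) +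
    ((1 - m) / 2) * Real.log (1 - m) + ((1 + m) / 2) * Real.log (1 + m)

lemma tanh_formula (t : ℝ) : Real.tanh t = (Real.exp (2*t) - 1) / (Real.exp (2*t) + 1) := by
  rw [Real.tanh_eq_sinh_div_cosh, Real.sinh_eq, Real.cosh_eq]
  have h1 : Real.exp (2*t) = Real.exp t * Real.exp t := by
    rw [two_mul, Real.exp_add]
  have h2 : Real.exp (-t) = (Real.exp t)⁻¹ := Real.exp_neg t
  have h3 : Real.exp t ≠ 0 := (Real.exp_pos t).ne'
  have h4 : Real.exp (2*t) + 1 > 0 := by positivity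
  field_simp [h1, h2]
  rw [h2, show t * 2 = 2 * t by ring, h1]
  field_simp

lemma tanh_mem_Ioo (t : ℝ) : Real.tanh t ∈ Set.Ioo (-1 : ℝ) 1 := by
  rw [tanh_formula]
  have hE : (0:ℝ) < Real.exp (2*t) := Real.exp_pos _
  constructor
  · rw [neg_lt, ← neg_div, div_lt_one (by linarith)]; linarith
  · rw [div_lt_one (by linarith)]; linarith

lemma tanh_pos_of_pos {t : ℝ} (ht : 0 < t) : 0 < Real.tanh t := by
  rw [tanh_formula]
  have hE : (1:ℝ) < Real.exp (2*t) := by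
    rw [show (1:ℝ) = Real.exp 0 by simp]
    exact Real.exp_lt_exp.2 (by linarith)
  apply div_pos <;> linarith

lemma myatanh_tanh (t : ℝ) :
    (1/2) * (Real.log (1 + Real.tanh t) - Real.log (1 - Real.tanh t)) = t := by
  have hE : (0:ℝ) < Real.exp (2*t) := Real.exp_pos _
  have hE1 : (0:ℝ) < Real.exp (2*t) + 1 := by linarith
  have h1 : 1 + Real.tanh t = 2 * Real.exp (2*t) / (Real.exp (2*t) + 1) := by
    rw [tanh_formula]; field_simp; ring
  have h2 : 1 - Real.tanh t = 2 / (Real.exp (2*t) + 1) := by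
    rw [tanh_formula]; field_simp; ring
  rw [h1, h2, Real.log_div (by positivity) hE1.ne', Real.log_div (by norm_num) hE1.ne',
    Real.log_mul (by norm_num) hE.ne', Real.log_exp]
  ring

lemma tanh_myatanh {m : ℝ} (h1 : -1 < m) (h2 : m < 1) :
    Real.tanh ((1/2) * (Real.log (1 + m) - Real.log (1 - m))) = m := by
  have hp : (0:ℝ) < 1 + m := by linarith
  have hq : (0:ℝ) < 1 - m := by linarith
  have hE : Real.exp (2 * ((1/2) * (Real.log (1 + m) - Real.log (1 - m)))) = (1+m)/(1-m) := by
    rw [show (2:ℝ) * ((1/2) * (Real.log (1 + m) - Real.log (1 - m)))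
        = Real.log ((1+m)/(1-m)) by rw [Real.log_div hp.ne' hq.ne']; ring,
      Real.exp_log (by positivity)]
  rw [tanh_formula, hE]
  field_simp
  ring

/-- Derivative of the rate function. -/
noncomputable def cwG (β h m : ℝ) : ℝ :=
  (1/2) * (Real.log (1 + m) - Real.log (1 - m)) - β * (m + h)

lemma hasDerivAt_cwRate (β h : ℝ) {m : ℝ} (h1 : -1 < m) (h2 : m < 1) :
    HasDerivAt (cwRate β h) (cwG β h m) m := by
  have hp : (1:ℝ) + m ≠ 0 := by linarith
  have hq : (1:ℝ) - m ≠ 0 := by linarith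
  have d1 : HasDerivAt (fun m : ℝ => -β * ((1 / 2) * m ^ 2 + h * m)) (-β * (m + h)) m := by
    have := ((hasDerivAt_pow 2 m).const_mul (1/2:ℝ)).add ((hasDerivAt_id m).const_mul h)
    have := this.const_mul (-β)
    refine this.congr_deriv ?_; push_cast; ring
  have dq : HasDerivAt (fun m : ℝ => 1 - m) (-1) m := by
    simpa using (hasDerivAt_id m).const_sub 1
  have dp : HasDerivAt (fun m : ℝ => 1 + m) 1 m := by
    simpa using (hasDerivAt_id m).const_add 1
  have d2 : HasDerivAt (fun m : ℝ => ((1 - m) / 2) * Real.log (1 - m))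
      ((-1/2) * Real.log (1 - m) - 1/2) m := by
    have := (dq.div_const 2).mul (dq.log hq)
    refine this.congr_deriv ?_
    field_simp
    ring
  have d3 : HasDerivAt (fun m : ℝ => ((1 + m) / 2) * Real.log (1 + m))
      ((1/2) * Real.log (1 + m) + 1/2) m := by
    have := (dp.div_const 2).mul (dp.log hp)
    refine this.congr_deriv ?_
    field_simp
  have := (d1.add d2).add d3
  refine this.congr_deriv ?_
  unfold cwG; ring

lemma hasDerivAt_cwG (β h : ℝ) {m : ℝ} (h1 : -1 < m) (h2 : m < 1) :
    HasDerivAt (cwG β h) (1 / (1 - m^2) - β) m := by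
  have hp : (1:ℝ) + m ≠ 0 := by linarith
  have hq : (1:ℝ) - m ≠ 0 := by linarith
  have dq : HasDerivAt (fun m : ℝ => 1 - m) (-1) m := by
    simpa using (hasDerivAt_id m).const_sub 1
  have dp : HasDerivAt (fun m : ℝ => 1 + m) 1 m := by
    simpa using (hasDerivAt_id m).const_add 1
  have d1 := (((dp.log hp).sub (dq.log hq)).const_mul (1/2:ℝ)).sub
    (((hasDerivAt_id m).add_const h).const_mul β)
  refine d1.congr_deriv ?_
  have e : (1:ℝ) - m^2 = (1+m)*(1-m) := by ring
  rw [e]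
  field_simp
  ring

lemma contOn_cwG (β h : ℝ) {a b : ℝ} (ha : -1 < a) (hb : b < 1) :
    ContinuousOn (cwG β h) (Set.Icc a b) := fun x hx =>
  ((hasDerivAt_cwG β h (by linarith [hx.1]) (by linarith [hx.2])).continuousAt).continuousWithinAt

lemma contOn_cwRate (β h : ℝ) {a b : ℝ} (ha : -1 < a) (hb : b < 1) :
    ContinuousOn (cwRate β h) (Set.Icc a b) := fun x hx =>
  ((hasDerivAt_cwRate β h (by linarith [hx.1]) (by linarith [hx.2])).continuousAt).continuousWithinAt

lemma cwG_zero (β h : ℝ) : cwG β h 0 = -(β * h) := by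
  simp [cwG]

lemma strictConvexOn_cwG (β h : ℝ) {b : ℝ} (hb0 : 0 < b) (hb : b < 1) :
    StrictConvexOn ℝ (Set.Icc 0 b) (cwG β h) := by
  apply StrictMonoOn.strictConvexOn_of_deriv (convex_Icc 0 b)
    (contOn_cwG β h (by norm_num) hb)
  rw [interior_Icc]
  intro x hx y hy hxy
  rw [(hasDerivAt_cwG β h (by linarith [hx.1]) (by linarith [hx.2, hb])).deriv,
    (hasDerivAt_cwG β h (by linarith [hy.1]) (by linarith [hy.2, hb])).deriv]
  have h1 : (0:ℝ) < 1 - y^2 := by nlinarith [hy.1, hy.2]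
  have h2 : 1 - y^2 < 1 - x^2 := by nlinarith [hx.1, hy.1]
  have := one_div_lt_one_div_of_lt h1 h2
  linarith

section Main

variable {β h : ℝ}

lemma cwG_neg_left (hβ : 1 < β) (hh : 0 < h) {m₀ : ℝ} (hm₀ : m₀ ∈ Set.Ioo (0:ℝ) 1)
    (hg : cwG β h m₀ = 0) {m : ℝ} (hm1 : 0 < m) (hm2 : m < m₀) : cwG β h m < 0 := by
  have sc := strictConvexOn_cwG β h hm₀.1 hm₀.2
  have hm₀0 : (0:ℝ) < m₀ := hm₀.1
  have ha' : (0:ℝ) < 1 - m/m₀ := by rw [sub_pos, div_lt_one hm₀0]; exact hm2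
  have hb' : (0:ℝ) < m/m₀ := div_pos hm1 hm₀0
  have hab' : (1 - m/m₀) + m/m₀ = 1 := by ring
  have key := sc.2 (Set.left_mem_Icc.2 hm₀0.le) (Set.right_mem_Icc.2 hm₀0.le)
    (ne_of_lt hm₀0) ha' hb' hab'
  rw [smul_eq_mul, smul_eq_mul, smul_eq_mul, smul_eq_mul, mul_zero, zero_add,
    div_mul_cancel₀ _ (ne_of_gt hm₀0), hg, mul_zero, add_zero, cwG_zero] at key
  have hβh : 0 < β * h := by positivity
  have ha : 0 < 1 - m/m₀ := by rw [sub_pos, div_lt_one hm₀0]; exact hm2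
  nlinarith

lemma cwG_pos_right (hβ : 1 < β) (hh : 0 < h) {m₀ : ℝ} (hm₀ : m₀ ∈ Set.Ioo (0:ℝ) 1)
    (hg : cwG β h m₀ = 0) {m : ℝ} (hm1 : m₀ < m) (hm2 : m < 1) : 0 < cwG β h m := by
  have hm0 : (0:ℝ) < m := lt_trans hm₀.1 hm1
  have sc := strictConvexOn_cwG β h hm0 hm2
  have ha' : (0:ℝ) < 1 - m₀/m := by rw [sub_pos, div_lt_one hm0]; exact hm1
  have hb' : (0:ℝ) < m₀/m := div_pos hm₀.1 hm0
  have hab' : (1 - m₀/m) + m₀/m = 1 := by ring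
  have key := sc.2 (Set.left_mem_Icc.2 hm0.le) (Set.right_mem_Icc.2 hm0.le)
    (ne_of_lt hm0) ha' hb' hab'
  rw [smul_eq_mul, smul_eq_mul, smul_eq_mul, smul_eq_mul, mul_zero, zero_add,
    div_mul_cancel₀ _ (ne_of_gt hm0), hg, cwG_zero] at key
  have hβh : 0 < β * h := by positivity
  have ha : 0 < 1 - m₀/m := by rw [sub_pos, div_lt_one hm0]; exact hm1
  have hb : 0 < m₀/m := div_pos hm₀.1 hm0
  nlinarith

lemma cwRate_symm (β h m : ℝ) : cwRate β h m = cwRate β h (-m) - 2*β*h*m := by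
  unfold cwRate
  rw [show (1:ℝ) - -m = 1 + m by ring, show (1:ℝ) + -m = 1 - m by ring]
  ring

/-- Existence of a zero of `cwG` in `(0,1)`. -/
lemma exists_cwG_zero (hβ : 1 < β) (hh : 0 < h) :
    ∃ m₀ ∈ Set.Ioo (0:ℝ) 1, cwG β h m₀ = 0 := by
  set b := Real.tanh (β * (1 + h)) with hbdef
  have hbIoo := tanh_mem_Ioo (β * (1 + h))
  have hb0 : 0 < b := tanh_pos_of_pos (by nlinarith)
  have hgb : cwG β h b = β * (1 - b) := by
    unfold cwG
    rw [hbdef, myatanh_tanh]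
    ring
  have hgb' : 0 < cwG β h b := by rw [hgb]; nlinarith [hbIoo.2]
  have hg0 : cwG β h 0 < 0 := by
    rw [cwG_zero]
    have : 0 < β * h := mul_pos (by linarith) hh
    linarith
  have := intermediate_value_Ioo hb0.le (contOn_cwG β h (by norm_num) hbIoo.2)
  obtain ⟨m₀, hm₀, hgm₀⟩ := this (Set.mem_Ioo.2 ⟨hg0, hgb'⟩)
  exact ⟨m₀, ⟨hm₀.1, lt_trans hm₀.2 hbIoo.2⟩, hgm₀⟩

lemma cwRate_min (hβ : 1 < β) (hh : 0 < h) {m₀ : ℝ} (hm₀ : m₀ ∈ Set.Ioo (0:ℝ) 1)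
    (hg : cwG β h m₀ = 0) :
    ∀ m ∈ Set.Ioo (-1:ℝ) 1, m ≠ m₀ → cwRate β h m₀ < cwRate β h m := by
  have anti : StrictAntiOn (cwRate β h) (Set.Icc 0 m₀) := by
    apply strictAntiOn_of_deriv_neg (convex_Icc _ _)
      (contOn_cwRate β h (by norm_num) hm₀.2)
    rw [interior_Icc]
    intro x hx
    rw [(hasDerivAt_cwRate β h (by linarith [hx.1]) (by linarith [hx.2, hm₀.2])).deriv]
    exact cwG_neg_left hβ hh hm₀ hg hx.1 hx.2
  have nonneg_case : ∀ m, 0 ≤ m → m < 1 → m ≠ m₀ → cwRate β h m₀ < cwRate β h m := by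
    intro m hm0 hm1 hne
    rcases lt_or_gt_of_ne hne with hlt | hgt
    · exact anti ⟨hm0, hlt.le⟩ ⟨hm₀.1.le, le_refl _⟩ hlt
    · have mono : StrictMonoOn (cwRate β h) (Set.Icc m₀ m) := by
        apply strictMonoOn_of_deriv_pos (convex_Icc _ _)
          (contOn_cwRate β h (by linarith [hm₀.1]) hm1)
        rw [interior_Icc]
        intro x hx
        rw [(hasDerivAt_cwRate β h (by linarith [hm₀.1, hx.1]) (by linarith [hx.2])).deriv]
        exact cwG_pos_right hβ hh hm₀ hg hx.1 (lt_trans hx.2 hm1)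
      exact mono ⟨le_refl _, hgt.le⟩ ⟨hgt.le, le_refl _⟩ hgt
  intro m hm hne
  rcases le_or_gt 0 m with hm0 | hm0
  · exact nonneg_case m hm0 hm.2 hne
  · have hsym := cwRate_symm β h m
    have hpos : 0 < β * h * (-m) := mul_pos (mul_pos (by linarith) hh) (by linarith)
    have hpos' : β * h * (-m) = -(β * h * m) := by ring
    have hneg : cwRate β h (-m) < cwRate β h m := by
      rw [hsym]; linarith
    rcases eq_or_ne (-m) m₀ with heq | hne'
    · rw [← heq]; exact hneg
    · have := nonneg_case (-m) (by linarith) (by linarith [hm.1]) hne'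
      linarith

end Main

/-- for `β > 1` and `h > 0`, the rate function `I_{β,h}` on `(-1,1)` has a
unique global minimizer `m₀`; moreover `m₀ ∈ (0,1)` and `m₀` is the largest solution in
`(-1,1)` of the Curie-Weiss equation `m = tanh(β(m+h))`. -/
theorem curieWeiss_rate_unique_minimizer (β h : ℝ) (hβ : 1 < β) (hh : 0 < h) :
    ∃ m₀ ∈ Set.Ioo (0 : ℝ) 1,
      (∀ m ∈ Set.Ioo (-1 : ℝ) 1, cwRate β h m₀ ≤ cwRate β h m) ∧
      (∀ m' ∈ Set.Ioo (-1 : ℝ) 1,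
        (∀ m ∈ Set.Ioo (-1 : ℝ) 1, cwRate β h m' ≤ cwRate β h m) → m' = m₀) ∧
      m₀ = Real.tanh (β * (m₀ + h)) ∧
      (∀ m ∈ Set.Ioo (-1 : ℝ) 1, m = Real.tanh (β * (m + h)) → m ≤ m₀) := by
  obtain ⟨m₀, hm₀, hg⟩ := exists_cwG_zero hβ hh
  have hm₀' : m₀ ∈ Set.Ioo (-1:ℝ) 1 := ⟨by linarith [hm₀.1], hm₀.2⟩
  have hmin := cwRate_min hβ hh hm₀ hg
  refine ⟨m₀, hm₀, ?_, ?_, ?_, ?_⟩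
  · intro m hm
    rcases eq_or_ne m m₀ with rfl | hne
    · exact le_refl _
    · exact (hmin m hm hne).le
  · intro m' hm' hminm'
    by_contra hne
    exact absurd (hminm' m₀ hm₀') (not_le.2 (hmin m' hm' hne))
  · have := tanh_myatanh hm₀'.1 hm₀'.2
    have heq : (1/2) * (Real.log (1 + m₀) - Real.log (1 - m₀)) = β * (m₀ + h) := by
      have := hg; unfold cwG at this; linarith
    rw [← heq, this]
  · intro m hm htanh
    by_contra hlt
    push_neg at hlt
    have hgm : cwG β h m = 0 := by
      unfold cwG
      have : (1/2) * (Real.log (1 + m) - Real.log (1 - m)) = β * (m + h) := by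
        conv_lhs => rw [htanh]
        exact myatanh_tanh (β * (m + h))
      linarith
    have := cwG_pos_right hβ hh hm₀ hg hlt hm.2
    linarith
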